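/- Let F be a field of characteristic 0 and let A ∈ M_n(F) be a nil-clean matrix. Then there exists a unique non-negative integer k such that the trace of A equals k·1 (k·1 denoting the image of k in F), and this k satisfies k ≤ n. -/

import Mathlib

/-- An element of a ring is *nil-clean* if it is the sum of an idempotent
and a nilpotent element. -/
def IsNilClean {R : Type*} [Ring R] (a : R) : Prop :=
  ∃ e n : R, e ^ 2 = e ∧ IsNilpotent n ∧ a = e + n

/-- Over a field of characteristic `0`, the trace of a nil-clean `n × n` matrix
is `k·1` for a unique natural number `k`, and this `k` satisfies `k ≤ n`. -/
theorem stmt_5 {F : Type*} [Field F] [CharZero F] {n : ℕ}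
    (A : Matrix (Fin n) (Fin n) F) (hA : IsNilClean A) :
    (∃! k : ℕ, A.trace = (k : F)) ∧ ∀ k : ℕ, A.trace = (k : F) → k ≤ n := by
  obtain ⟨E, N, hE, hN, rfl⟩ := hA
  have htrN : N.trace = 0 := (Matrix.isNilpotent_trace_of_isNilpotent hN).eq_zero
  -- trace of E is a natural number ≤ n
  set f := Matrix.toLin' E with hf
  have hff : f ∘ₗ f = f := by
    rw [hf, ← Matrix.toLin'_mul, ← pow_two, hE]
  obtain ⟨p, hp⟩ := (LinearMap.isProj_iff_isIdempotentElem f).mpr hff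
  have htrE : E.trace = (Module.finrank F p : F) := by
    have := hp.trace
    rw [LinearMap.trace_eq_matrix_trace F (Pi.basisFun F (Fin n)) f,
      LinearMap.toMatrix_eq_toMatrix', LinearMap.toMatrix'_toLin'] at this
    exact this
  have htrA : (E + N).trace = ((Module.finrank F p : ℕ) : F) := by
    rw [Matrix.trace_add, htrN, add_zero, htrE]
  have hle : Module.finrank F p ≤ n := by
    simpa using p.finrank_le
  constructor
  · exact ⟨Module.finrank F p, htrA, fun k hk => Nat.cast_injective (htrA ▸ hk : ((Module.finrank F p : ℕ) : F) = (k:F)).symm⟩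
  · intro k hk
    have : (k : F) = (Module.finrank F p : F) := hk ▸ htrA
    exact (Nat.cast_injective this) ▸ hle
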